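/- Let V be a real Hilbert space, z : [0,T] → V continuous with correlation operator R ψ = ∫₀ᵀ ⟨z(t), ψ⟩ z(t) dt. Suppose {ψᵢ}_{i∈I} is a complete orthonormal system of eigenvectors of R with eigenvalues {λᵢ}. Then ∫₀ᵀ ‖z(t) - Σ_{i=1}^{ℓ} ⟨z(t), ψᵢ⟩ψᵢ‖² dt = Σ_{i>ℓ} λᵢ, where the eigenvalues are ordered decreasingly. -/

import Mathlib

open scoped RealInnerProductSpace
open MeasureTheory

/-- POD error formula: the approximation error equals the sum of the neglected
eigenvalues of the correlation operator. -/
theorem pod_error_eq_neglected_eigenvalues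
    {V : Type*} [NormedAddCommGroup V] [InnerProductSpace ℝ V] [CompleteSpace V]
    (T : ℝ) (hT : 0 ≤ T) (z : ℝ → V) (hz : Continuous z)
    (R : V → V)
    (hR : ∀ ψ : V, R ψ = ∫ t in (0:ℝ)..T, ⟪z t, ψ⟫ • z t)
    (ψ : ℕ → V) (hortho : Orthonormal ℝ ψ)
    (hcomplete : (Submodule.span ℝ (Set.range ψ)).topologicalClosure = ⊤)
    (lam : ℕ → ℝ) (heig : ∀ i, R (ψ i) = lam i • ψ i)
    (hnonneg : ∀ i, 0 ≤ lam i) (hdecr : Antitone lam)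
    (ℓ : ℕ) :
    ∫ t in (0:ℝ)..T, ‖z t - ∑ i ∈ Finset.range ℓ, ⟪z t, ψ i⟫ • ψ i‖ ^ 2 =
      ∑' i : ℕ, lam (ℓ + i) := by
  classical
  -- Hilbert basis and Parseval
  let b : HilbertBasis ℕ ℝ V := HilbertBasis.mk hortho (by rw [hcomplete])
  have hb : ⇑b = ψ := HilbertBasis.coe_mk _ _
  have parseval : ∀ x : V, HasSum (fun i => ⟪x, ψ i⟫ ^ 2) (‖x‖ ^ 2) := by
    intro x
    have h := b.hasSum_inner_mul_inner x x
    rw [hb] at h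
    simpa [real_inner_self_eq_norm_sq, sq, real_inner_comm] using h
  -- continuity and integrability helpers
  have hcont : ∀ w : V, Continuous fun t => ⟪z t, w⟫ ^ 2 := fun w =>
    (hz.inner continuous_const).pow 2
  have hint : ∀ w : V, IntervalIntegrable (fun t => ⟪z t, w⟫ ^ 2) volume 0 T :=
    fun w => (hcont w).intervalIntegrable 0 T
  have hintz : IntervalIntegrable (fun t => ‖z t‖ ^ 2) volume 0 T :=
    ((hz.norm.pow 2)).intervalIntegrable 0 T
  -- eigenvalue formula
  have lam_eq : ∀ i, lam i = ∫ t in (0:ℝ)..T, ⟪z t, ψ i⟫ ^ 2 := by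
    intro i
    have hi : ‖ψ i‖ = 1 := hortho.1 i
    have hii : IntervalIntegrable (fun t => ⟪z t, ψ i⟫ • z t) volume 0 T :=
      ((hz.inner continuous_const).smul hz).intervalIntegrable 0 T
    have h1 : ⟪ψ i, R (ψ i)⟫ = lam i := by
      rw [heig i, real_inner_smul_right, real_inner_self_eq_norm_sq, hi]
      ring
    have h2 : ⟪ψ i, R (ψ i)⟫ = ∫ t in (0:ℝ)..T, ⟪z t, ψ i⟫ ^ 2 := by
      have hc := (innerSL ℝ (ψ i)).intervalIntegral_comp_comm hii
      simp only [innerSL_apply_apply] at hc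
      rw [hR, ← hc]
      congr 1
      funext t
      rw [inner_smul_right, real_inner_comm]
      ring
    rw [← h1, h2]
  -- finite-rank Pythagoras
  have pyth : ∀ (x : V) (n : ℕ), ‖x - ∑ i ∈ Finset.range n, ⟪x, ψ i⟫ • ψ i‖ ^ 2
      = ‖x‖ ^ 2 - ∑ i ∈ Finset.range n, ⟪x, ψ i⟫ ^ 2 := by
    intro x n
    have hS : ⟪x, ∑ i ∈ Finset.range n, ⟪x, ψ i⟫ • ψ i⟫
        = ∑ i ∈ Finset.range n, ⟪x, ψ i⟫ ^ 2 := by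
      rw [inner_sum]
      simp [real_inner_smul_right, sq]
    have hSS : ‖∑ i ∈ Finset.range n, ⟪x, ψ i⟫ • ψ i‖ ^ 2
        = ∑ i ∈ Finset.range n, ⟪x, ψ i⟫ ^ 2 := by
      rw [← real_inner_self_eq_norm_sq, hortho.inner_sum]
      simp [sq]
    rw [@norm_sub_sq_real, hS, hSS]
    ring
  -- tail formula
  have tail : ∀ x : V, ‖x - ∑ i ∈ Finset.range ℓ, ⟪x, ψ i⟫ • ψ i‖ ^ 2
      = ∑' i, ⟪x, ψ (ℓ + i)⟫ ^ 2 := by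
    intro x
    have hsum := (parseval x).summable
    have h := Summable.sum_add_tsum_nat_add (f := fun i => ⟪x, ψ i⟫ ^ 2) ℓ hsum
    rw [pyth x ℓ, ← (parseval x).tsum_eq, ← h]
    simp [add_comm]
  -- summability of eigenvalues
  have hlam_sum : Summable lam := by
    refine summable_of_sum_le (c := ∫ t in (0:ℝ)..T, ‖z t‖ ^ 2) hnonneg ?_
    intro s
    have h1 : ∑ i ∈ s, lam i = ∫ t in (0:ℝ)..T, ∑ i ∈ s, ⟪z t, ψ i⟫ ^ 2 := by
      rw [intervalIntegral.integral_finset_sum (fun i _ => hint (ψ i))]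
      exact Finset.sum_congr rfl fun i _ => lam_eq i
    rw [h1]
    apply intervalIntegral.integral_mono_on hT
      ((continuous_finset_sum s fun i _ => hcont (ψ i)).intervalIntegrable 0 T) hintz
    intro t _
    exact sum_le_hasSum s (fun i _ => sq_nonneg _) (parseval (z t))
  have hlam_tail : Summable fun i => lam (ℓ + i) := by
    simpa [add_comm] using (summable_nat_add_iff ℓ).2 hlam_sum
  -- rewrite to set integral and swap
  rw [intervalIntegral.integral_of_le hT]
  have hLHS : ∀ t, ‖z t - ∑ i ∈ Finset.range ℓ, ⟪z t, ψ i⟫ • ψ i‖ ^ 2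
      = ∑' i, ⟪z t, ψ (ℓ + i)⟫ ^ 2 := fun t => tail (z t)
  simp only [hLHS]
  set μ := volume.restrict (Set.Ioc (0:ℝ) T) with hμ
  have hg_int : ∀ i : ℕ, Integrable (fun t => ⟪z t, ψ (ℓ + i)⟫ ^ 2) μ :=
    fun i => (hcont (ψ (ℓ + i))).integrableOn_Ioc
  have hg_setint : ∀ i : ℕ, (∫ t, ⟪z t, ψ (ℓ + i)⟫ ^ 2 ∂μ) = lam (ℓ + i) := by
    intro i
    rw [lam_eq, intervalIntegral.integral_of_le hT]
  rw [MeasureTheory.integral_tsum]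
  · exact tsum_congr fun i => hg_setint i
  · exact fun i => (hcont (ψ (ℓ + i))).aestronglyMeasurable
  · have hle : ∀ i : ℕ, (∫⁻ t, ‖⟪z t, ψ (ℓ + i)⟫ ^ 2‖ₑ ∂μ) = ENNReal.ofReal (lam (ℓ + i)) := by
      intro i
      rw [← hg_setint i, ← ofReal_integral_norm_eq_lintegral_enorm (hg_int i)]
      congr 1
      refine integral_congr_ae (Filter.Eventually.of_forall fun t => ?_)
      exact Real.norm_of_nonneg (sq_nonneg _)
    simp only [hle]
    rw [← ENNReal.ofReal_tsum_of_nonneg (fun i => hnonneg _) hlam_tail]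
    exact ENNReal.ofReal_ne_top
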